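/- Evaluation at 1 ∈ ℤ_p gives a group isomorphism from the group of continuous homomorphisms Hom_c(ℤ_p, U₀) to U₀, where U₀ = {x ∈ 𝔬* : |x - 1| < p^{-1/(p-1)}}. -/
import Mathlib


/-!
STATEMENT 3: Evaluation at `1 ∈ ℤ_p` is a group isomorphism (here: a bijection, which is
automatically multiplicative from the source) from the continuous homomorphisms
`Hom_c(ℤ_p, U₀)` to `U₀ = {x : ‖x - 1‖ < p^{-1/(p-1)}}`, where `K` models `ℂ_p`.
-/

noncomputable section

def padicRadius (p : ℕ) : ℝ := (p : ℝ) ^ (-(1 : ℝ) / ((p : ℝ) - 1))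

section radius
variable (p : ℕ) [Fact (Nat.Prime p)]

lemma padic_two_le : (2 : ℝ) ≤ (p : ℝ) := by
  exact_mod_cast (Fact.out : Nat.Prime p).two_le

lemma padicRadius_pos : 0 < padicRadius p :=
  Real.rpow_pos_of_pos (by linarith [padic_two_le p]) _

lemma padicRadius_lt_one : padicRadius p < 1 := by
  have h2 := padic_two_le p
  apply Real.rpow_lt_one_of_one_lt_of_neg (by linarith)
  have : (0:ℝ) < (p:ℝ) - 1 := by linarith
  rw [div_neg_iff]
  right; constructor <;> linarith

lemma padicRadius_pow : padicRadius p ^ (p - 1) = (p : ℝ)⁻¹ := by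
  have h2 := padic_two_le p
  have hp0 : (0:ℝ) ≤ (p:ℝ) := by linarith
  have hcast : ((p - 1 : ℕ) : ℝ) = (p : ℝ) - 1 := by
    have : 1 ≤ p := by exact_mod_cast (Fact.out : Nat.Prime p).one_lt.le
    push_cast [Nat.cast_sub this]
    ring
  rw [padicRadius, ← Real.rpow_natCast ((p:ℝ) ^ (-(1:ℝ)/((p:ℝ)-1))) (p-1),
    ← Real.rpow_mul hp0, hcast]
  have hne : (p:ℝ) - 1 ≠ 0 := by linarith
  rw [div_mul_cancel₀ _ hne, Real.rpow_neg_one]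

lemma padic_pow_pred_le {c : ℝ} (hc0 : 0 ≤ c) (hc : c < padicRadius p) :
    c ^ (p - 1) ≤ (p : ℝ)⁻¹ := by
  rw [← padicRadius_pow p]
  exact pow_le_pow_left₀ hc0 hc.le _
end radius

section ultra
variable {K : Type*} [NormedField K] [IsUltrametricDist K]

lemma aux_norm_eq_one {x : K} (h : ‖x - 1‖ < 1) : ‖x‖ = 1 := by
  have h1 : ‖x‖ ≤ 1 := by
    have := IsUltrametricDist.norm_add_le_max (x - 1) 1
    simp only [sub_add_cancel, norm_one] at this
    exact this.trans (max_le h.le le_rfl)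
  have h2 : (1:ℝ) ≤ max ‖x‖ ‖x - 1‖ := by
    have := IsUltrametricDist.norm_add_le_max x (-(x - 1))
    simp only [norm_neg] at this
    calc (1:ℝ) = ‖x + -(x-1)‖ := by norm_num
    _ ≤ _ := this
  rcases max_cases ‖x‖ ‖x - 1‖ with ⟨he, _⟩ | ⟨he, _⟩
  · rw [he] at h2; linarith
  · rw [he] at h2; linarith

lemma aux_pow_sub_one {x : K} (hx : ‖x‖ = 1) (m : ℕ) : ‖x ^ m - 1‖ ≤ ‖x - 1‖ := by
  induction m with
  | zero => simp
  | succ n ih =>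
    have he : x ^ (n+1) - 1 = x ^ n * (x - 1) + (x ^ n - 1) := by ring
    rw [he]
    refine (IsUltrametricDist.norm_add_le_max _ _).trans (max_le ?_ ih)
    rw [norm_mul, norm_pow, hx, one_pow, one_mul]

lemma aux_zpow_sub_one {x : K} (hx : ‖x‖ = 1) (m : ℤ) : ‖x ^ m - 1‖ ≤ ‖x - 1‖ := by
  have hx0 : x ≠ 0 := by intro h; rw [h] at hx; simp at hx
  obtain ⟨n, rfl | rfl⟩ := m.eq_nat_or_neg
  · rw [zpow_natCast]; exact aux_pow_sub_one hx n
  · have he : x ^ (-(n:ℤ)) - 1 = x ^ (-(n:ℤ)) * (1 - x ^ n) := by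
      rw [mul_sub, mul_one, ← zpow_natCast x n, ← zpow_add₀ hx0]
      simp
    rw [he, norm_mul, norm_zpow, hx, one_zpow, one_mul, norm_sub_rev]
    exact aux_pow_sub_one hx n
end ultra

section step
variable {p : ℕ} [Fact (Nat.Prime p)] {K : Type*} [NormedField K] [IsUltrametricDist K]

lemma aux_pow_p (hp : ‖(p : K)‖ = (p : ℝ)⁻¹) {x : K} (hc : ‖x - 1‖ < padicRadius p) :
    ‖x ^ p - 1‖ ≤ ‖x - 1‖ * (p : ℝ)⁻¹ := by
  have hpp : Nat.Prime p := Fact.out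
  have hc0 : (0:ℝ) ≤ ‖x - 1‖ := norm_nonneg _
  have hc1 : ‖x - 1‖ < 1 := hc.trans (padicRadius_lt_one p)
  have hpinv : (0:ℝ) ≤ (p:ℝ)⁻¹ := by positivity
  have key : x ^ p - 1 = ∑ i ∈ Finset.range p, (p.choose (i+1) : K) * (x - 1) ^ (i+1) := by
    have := add_pow (x - 1) 1 p
    simp only [one_pow, mul_one, sub_add_cancel] at this
    rw [this, Finset.sum_range_succ']
    simp [mul_comm]
  rw [key]
  refine IsUltrametricDist.norm_sum_le_of_forall_le_of_nonneg (by positivity) ?_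
  intro i hi
  rw [Finset.mem_range] at hi
  rw [norm_mul, norm_pow]
  rcases eq_or_lt_of_le (Nat.succ_le_of_lt hi) with he | hlt
  · -- i + 1 = p
    have h1 : (p.choose (i+1) : K) = 1 := by
      rw [show i+1 = p from he, Nat.choose_self, Nat.cast_one]
    rw [h1, norm_one, one_mul]
    have hi' : i = p - 1 := by omega
    calc ‖x - 1‖ ^ (i+1) = ‖x - 1‖ * ‖x - 1‖ ^ i := by ring
    _ ≤ ‖x - 1‖ * (p:ℝ)⁻¹ := by
        refine mul_le_mul_of_nonneg_left ?_ hc0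
        rw [hi']; exact padic_pow_pred_le p hc0 hc
  · -- i + 1 < p, so p ∣ choose
    obtain ⟨m, hm⟩ := hpp.dvd_choose_self (Nat.succ_ne_zero i) hlt
    have hnc : ‖(p.choose (i+1) : K)‖ ≤ (p:ℝ)⁻¹ := by
      rw [hm]
      push_cast
      rw [norm_mul, hp]
      exact mul_le_of_le_one_right hpinv (IsUltrametricDist.norm_natCast_le_one K m)
    have hxp : ‖x - 1‖ ^ (i + 1) ≤ ‖x - 1‖ := by
      exact pow_le_of_le_one hc0 hc1.le (Nat.succ_ne_zero i)
    calc ‖(p.choose (i+1) : K)‖ * ‖x - 1‖ ^ (i+1) ≤ (p:ℝ)⁻¹ * ‖x - 1‖ :=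
          mul_le_mul hnc hxp (by positivity) hpinv
    _ = ‖x - 1‖ * (p:ℝ)⁻¹ := mul_comm _ _

lemma aux_pow_pk (hp : ‖(p : K)‖ = (p : ℝ)⁻¹) {x : K} (hc : ‖x - 1‖ < padicRadius p) (k : ℕ) :
    ‖x ^ p ^ k - 1‖ ≤ ‖x - 1‖ * ((p : ℝ)⁻¹) ^ k := by
  have hc0 : (0:ℝ) ≤ ‖x - 1‖ := norm_nonneg _
  have hpinv1 : (p:ℝ)⁻¹ ≤ 1 := by
    rw [inv_le_one_iff₀]; right; linarith [padic_two_le p]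
  have hpinv0 : (0:ℝ) ≤ (p:ℝ)⁻¹ := by positivity
  induction k with
  | zero => simpa using aux_pow_sub_one (aux_norm_eq_one (hc.trans (padicRadius_lt_one p))) 1
  | succ k ih =>
    have hlt : ‖x ^ p ^ k - 1‖ < padicRadius p := by
      refine lt_of_le_of_lt ih (lt_of_le_of_lt ?_ hc)
      exact mul_le_of_le_one_right hc0 (pow_le_one₀ hpinv0 hpinv1)
    have hgoal : x ^ p ^ (k+1) = (x ^ p ^ k) ^ p := by rw [← pow_mul, pow_succ]
    rw [hgoal]
    calc ‖(x ^ p ^ k) ^ p - 1‖ ≤ ‖x ^ p ^ k - 1‖ * (p:ℝ)⁻¹ := aux_pow_p hp hlt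
    _ ≤ (‖x - 1‖ * (p:ℝ)⁻¹ ^ k) * (p:ℝ)⁻¹ := mul_le_mul_of_nonneg_right ih hpinv0
    _ = ‖x - 1‖ * (p:ℝ)⁻¹ ^ (k+1) := by ring

lemma aux_main (hp : ‖(p : K)‖ = (p : ℝ)⁻¹) {x : K} (hc : ‖x - 1‖ < padicRadius p) (n : ℕ) (j : ℤ)
    (hj : (p:ℤ) ^ n ∣ j) : ‖x ^ j - 1‖ ≤ ‖x - 1‖ * ((p : ℝ)⁻¹) ^ n := by
  obtain ⟨m, rfl⟩ := hj
  have hx1 : ‖x‖ = 1 := aux_norm_eq_one (hc.trans (padicRadius_lt_one p))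
  have hx0 : x ≠ 0 := by intro h; rw [h] at hx1; simp at hx1
  have hy1 : ‖x ^ p ^ n‖ = 1 := by rw [norm_pow, hx1, one_pow]
  have he : x ^ ((p:ℤ) ^ n * m) = (x ^ p ^ n) ^ m := by
    rw [zpow_mul, ← zpow_natCast x (p ^ n)]
    norm_num
  rw [he]
  calc ‖(x ^ p ^ n) ^ m - 1‖ ≤ ‖x ^ p ^ n - 1‖ := aux_zpow_sub_one hy1 m
  _ ≤ ‖x - 1‖ * ((p : ℝ)⁻¹) ^ n := aux_pow_pk hp hc n

lemma aux_close (hp : ‖(p : K)‖ = (p : ℝ)⁻¹) {x : K} (hc : ‖x - 1‖ < padicRadius p)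
    (n : ℕ) (s t : ℕ) (hst : (p:ℤ)^n ∣ (s:ℤ) - (t:ℤ)) :
    ‖x ^ s - x ^ t‖ ≤ ‖x - 1‖ * ((p:ℝ)⁻¹) ^ n := by
  have hx1 : ‖x‖ = 1 := aux_norm_eq_one (hc.trans (padicRadius_lt_one p))
  have hx0 : x ≠ 0 := by intro h; rw [h] at hx1; simp at hx1
  have he : x ^ t * (x ^ ((s:ℤ) - (t:ℤ)) - 1) = x ^ s - x ^ t := by
    rw [mul_sub, mul_one, ← zpow_natCast x t, ← zpow_add₀ hx0,
      show (t:ℤ) + ((s:ℤ) - (t:ℤ)) = (s:ℤ) by ring, zpow_natCast]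
  rw [← he, norm_mul, norm_pow, hx1, one_pow, one_mul]
  exact aux_main hp hc n _ hst

end step

theorem eval_one_bijective_homc_Zp_U0
    (p : ℕ) [Fact (Nat.Prime p)]
    (K : Type) [NormedField K] [CompleteSpace K] [IsAlgClosed K] [CharZero K]
    (hna : IsNonarchimedean fun x : K => ‖x‖)
    (hp : ‖(p : K)‖ = (p : ℝ)⁻¹) :
    Function.Bijective
      (fun f : {f : ℤ_[p] → K // Continuous f ∧ (∀ a b : ℤ_[p], f (a + b) = f a * f b) ∧
          ∀ a : ℤ_[p], ‖f a - 1‖ < padicRadius p} =>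
        (⟨f.1 1, f.2.2.2 1⟩ : {x : K // ‖x - 1‖ < padicRadius p})) := by
  haveI : IsUltrametricDist K :=
    IsUltrametricDist.isUltrametricDist_of_isNonarchimedean_norm hna
  have hp2 := padic_two_le p
  have hp0 : (0:ℝ) < (p:ℝ) := by linarith
  have hpinv0 : (0:ℝ) ≤ (p:ℝ)⁻¹ := by positivity
  have hpinv1 : (p:ℝ)⁻¹ < 1 := by
    rw [inv_lt_one_iff₀]; right; linarith
  constructor
  · -- Injectivity
    rintro ⟨f, fc, fm, fb⟩ ⟨g, gc, gm, gb⟩ h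
    simp only [Subtype.mk.injEq] at h ⊢
    have f0 : ∀ (f : ℤ_[p] → K), (∀ a b, f (a+b) = f a * f b) →
        (∀ a, ‖f a - 1‖ < padicRadius p) → f 0 = 1 := by
      intro f fm fb
      have h1 : ‖f 0‖ = 1 := aux_norm_eq_one ((fb 0).trans (padicRadius_lt_one p))
      have h0 : f 0 ≠ 0 := by intro hh; rw [hh] at h1; simp at h1
      have he : f 0 * 1 = f 0 * f 0 := by
        rw [mul_one]; nth_rewrite 1 [show (0:ℤ_[p]) = 0 + 0 by ring]; exact fm 0 0
      exact (mul_left_cancel₀ h0 he).symm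
    have hnat : ∀ n : ℕ, f ((n : ℕ) : ℤ_[p]) = g ((n : ℕ) : ℤ_[p]) := by
      intro n
      induction n with
      | zero => rw [Nat.cast_zero, f0 f fm fb, f0 g gm gb]
      | succ n ih =>
        have hc : ((n+1 : ℕ) : ℤ_[p]) = ((n:ℕ) : ℤ_[p]) + 1 := by push_cast; ring
        rw [hc, fm, gm, ih, h]
    exact PadicInt.denseRange_natCast.equalizer fc gc (funext hnat)
  · -- Surjectivity
    rintro ⟨x, hx⟩
    have hc0 : (0:ℝ) ≤ ‖x - 1‖ := norm_nonneg _
    have hx1 : ‖x‖ = 1 := aux_norm_eq_one (hx.trans (padicRadius_lt_one p))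
    set c := ‖x - 1‖ with hcdef
    set seq : ℤ_[p] → ℕ → K := fun a n => x ^ (a.appr n) with hseq
    have htends0 : Filter.Tendsto (fun n : ℕ => c * (p:ℝ)⁻¹ ^ n) Filter.atTop (nhds 0) := by
      have := (tendsto_pow_atTop_nhds_zero_of_lt_one hpinv0 hpinv1).const_mul c
      simpa using this
    -- key divisibility tool
    have hdvd : ∀ (s t : ℕ) (a : ℤ_[p]) (n : ℕ), ‖(s : ℤ_[p]) - a‖ ≤ (p:ℝ)^(-n:ℤ) →
        ‖(t : ℤ_[p]) - a‖ ≤ (p:ℝ)^(-n:ℤ) → (p:ℤ)^n ∣ (s:ℤ) - (t:ℤ) := by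
      intro s t a n hs ht
      rw [← PadicInt.norm_int_le_pow_iff_dvd]
      have he : (((s:ℤ) - (t:ℤ) : ℤ) : ℤ_[p]) = ((s:ℤ_[p]) - a) + (-((t:ℤ_[p]) - a)) := by
        push_cast; ring
      rw [he]
      refine (PadicInt.nonarchimedean _ _).trans (max_le hs ?_)
      rwa [norm_neg]
    have happr : ∀ (a : ℤ_[p]) (n : ℕ), ‖(a.appr n : ℤ_[p]) - a‖ ≤ (p:ℝ)^(-n:ℤ) := by
      intro a n
      rw [norm_sub_rev]
      exact (PadicInt.norm_le_pow_iff_mem_span_pow _ n).mpr (PadicInt.appr_spec n a)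
    have hpowmono : ∀ m n : ℕ, m ≤ n → ((p:ℝ)^(-n:ℤ)) ≤ (p:ℝ)^(-m:ℤ) := by
      intro m n h
      exact zpow_le_zpow_right₀ (by linarith) (by omega)
    have hclose : ∀ (n : ℕ) (s t : ℕ), (p:ℤ)^n ∣ (s:ℤ) - (t:ℤ) →
        ‖x ^ s - x ^ t‖ ≤ c * ((p:ℝ)⁻¹) ^ n := by
      intro n s t h
      exact aux_close hp hx n s t h
    have hcau : ∀ a : ℤ_[p], CauchySeq (seq a) := by
      intro a
      refine cauchySeq_of_le_tendsto_0' (fun n => c * (p:ℝ)⁻¹ ^ n) ?_ htends0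
      intro n m hnm
      rw [dist_eq_norm]
      exact hclose n _ _ (hdvd _ _ a n (happr a n) ((happr a m).trans (hpowmono n m hnm)))
    choose F hF using fun a : ℤ_[p] => cauchySeq_tendsto_of_complete (hcau a)
    have hFle : ∀ a : ℤ_[p], ‖F a - 1‖ ≤ c := by
      intro a
      have h1 : Filter.Tendsto (fun n => ‖seq a n - 1‖) Filter.atTop (nhds ‖F a - 1‖) :=
        ((hF a).sub tendsto_const_nhds).norm
      exact le_of_tendsto h1 (Filter.Eventually.of_forall fun n => aux_pow_sub_one hx1 _)
    have hFb : ∀ a : ℤ_[p], ‖F a - 1‖ < padicRadius p := fun a => (hFle a).trans_lt hx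
    have hFunit : ∀ a, ‖F a‖ = 1 := fun a =>
      aux_norm_eq_one ((hFb a).trans (padicRadius_lt_one p))
    have hFmul : ∀ a b : ℤ_[p], F (a + b) = F a * F b := by
      intro a b
      have hmul : Filter.Tendsto (fun n => seq a n * seq b n) Filter.atTop
          (nhds (F a * F b)) := (hF a).mul (hF b)
      have hdiff : Filter.Tendsto (fun n => seq (a+b) n - seq a n * seq b n)
          Filter.atTop (nhds 0) := by
        refine squeeze_zero_norm (fun n => ?_) htends0
        have hsmul : seq a n * seq b n = x ^ (a.appr n + b.appr n) := (pow_add x _ _).symm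
        rw [hsmul]
        refine hclose n _ _ (hdvd _ _ (a+b) n (happr (a+b) n) ?_)
        have he2 : ((a.appr n + b.appr n : ℕ) : ℤ_[p]) - (a + b)
            = ((a.appr n : ℤ_[p]) - a) + ((b.appr n : ℤ_[p]) - b) := by push_cast; ring
        rw [he2]
        exact (PadicInt.nonarchimedean _ _).trans (max_le (happr a n) (happr b n))
      have h2 := hdiff.add hmul
      rw [zero_add] at h2
      refine tendsto_nhds_unique (hF (a+b)) ?_
      simpa using h2
    have hF1 : F 1 = x := by
      refine tendsto_nhds_unique (hF 1) ?_
      have hdiff : Filter.Tendsto (fun n => seq 1 n - x) Filter.atTop (nhds 0) := by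
        refine squeeze_zero_norm (fun n => ?_) htends0
        calc ‖seq 1 n - x‖ = ‖x ^ ((1:ℤ_[p]).appr n) - x ^ (1:ℕ)‖ := by rw [pow_one]
        _ ≤ c * (p:ℝ)⁻¹ ^ n := by
            refine hclose n _ 1 (hdvd _ _ 1 n (happr 1 n) ?_)
            simp only [Nat.cast_one, sub_self, norm_zero]
            positivity
      have h2 := hdiff.add (tendsto_const_nhds (x := x))
      rw [zero_add] at h2
      simpa using h2
    have hFnear : ∀ (a : ℤ_[p]) (n : ℕ), ‖a‖ ≤ (p:ℝ)^(-n:ℤ) →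
        ‖F a - 1‖ ≤ c * (p:ℝ)⁻¹ ^ n := by
      intro a n ha
      have h1 : Filter.Tendsto (fun m => ‖seq a m - 1‖) Filter.atTop (nhds ‖F a - 1‖) :=
        ((hF a).sub tendsto_const_nhds).norm
      refine le_of_tendsto h1 ?_
      filter_upwards [Filter.eventually_ge_atTop n] with m hm
      calc ‖seq a m - 1‖ = ‖x ^ (a.appr m) - x ^ (0:ℕ)‖ := by rw [pow_zero]
      _ ≤ c * (p:ℝ)⁻¹ ^ n := by
          refine hclose n _ 0 (hdvd _ _ a n ((happr a m).trans (hpowmono n m hm)) ?_)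
          simpa using ha
    have hcont : Continuous F := by
      rw [Metric.continuous_iff]
      intro b ε hε
      obtain ⟨n, hn⟩ := (htends0.eventually_lt_const hε).exists
      refine ⟨(p:ℝ)^(-n:ℤ), by positivity, ?_⟩
      intro a ha
      have hab : ‖a - b‖ ≤ (p:ℝ)^(-n:ℤ) := by
        rw [dist_eq_norm] at ha; exact ha.le
      have h1 : F a = F b * F (a - b) := by rw [← hFmul]; congr 1; ring
      rw [dist_eq_norm, h1, show F b * F (a-b) - F b = F b * (F (a-b) - 1) by ring,
        norm_mul, hFunit, one_mul]
      exact (hFnear _ n hab).trans_lt hn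
    exact ⟨⟨F, hcont, hFmul, hFb⟩, Subtype.ext hF1⟩
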